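/- Let G be a simple graph on a finite vertex set V and let u : V → C be a Nash equilibrium strategy profile. Define the refined profile u' sending each vertex v to the pair (u(v), K(v)), where K(v) is the connected component of v in the subgraph of G induced on the cluster {x ∈ V : u(x) = u(v)}. Then u' is a Nash equilibrium (with strategy set the pairs consisting of a strategy and a component). In particular, refining any equilibrium partition by splitting each part into the connected components of its induced subgraph yields an equilibrium partition. -/

import Mathlib

open SimpleGraph

/-- Payoff of vertex `v` for strategy `c` under profile `u`: the number of
neighbors of `v` playing strategy `c`. -/
noncomputable def payoff {V C : Type*} (G : SimpleGraph V) (u : V → C) (v : V) (c : C) : ℕ :=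
  {x | G.Adj v x ∧ u x = c}.ncard

/-- `u` is a Nash equilibrium of the structured coordination game with
neutral options on `G`. -/
def IsNash {V C : Type*} (G : SimpleGraph V) (u : V → C) : Prop :=
  ∀ (v : V) (c : C), payoff G u v c ≤ payoff G u v (u v)

/-- The subgraph of `G` whose edges join vertices playing the same strategy
under `u`.  Its connected components are exactly the connected components of
the subgraphs of `G` induced on the clusters of `u`. -/
def sameStrategySubgraph {V C : Type*} (G : SimpleGraph V) (u : V → C) : SimpleGraph V where
  Adj x y := G.Adj x y ∧ u x = u y
  symm := ⟨fun x y h => ⟨h.1.symm, h.2.symm⟩⟩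
  loopless := ⟨fun x h => G.loopless.irrefl x h.1⟩

theorem refinement_isNash {V C : Type*} [Fintype V] (G : SimpleGraph V)
    (u : V → C) (hu : IsNash G u) :
    IsNash G (fun v => (u v, (sameStrategySubgraph G u).connectedComponentMk v)) := by
  intro v p
  obtain ⟨c, K⟩ := p
  have h1 : payoff G (fun v => (u v, (sameStrategySubgraph G u).connectedComponentMk v)) v (c, K)
      ≤ payoff G u v c := by
    apply Set.ncard_le_ncard _ (Set.toFinite _)
    intro x hx
    exact ⟨hx.1, (Prod.mk.injEq _ _ _ _ ▸ hx.2).1⟩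
  have h2 : payoff G u v (u v)
      = payoff G (fun v => (u v, (sameStrategySubgraph G u).connectedComponentMk v)) v
        (u v, (sameStrategySubgraph G u).connectedComponentMk v) := by
    unfold payoff
    congr 1
    ext x
    simp only [Set.mem_setOf_eq, Prod.mk.injEq]
    constructor
    · rintro ⟨hadj, hux⟩
      refine ⟨hadj, hux, ?_⟩
      exact ConnectedComponent.sound (Adj.reachable ⟨hadj.symm, hux⟩)
    · rintro ⟨hadj, hux, _⟩
      exact ⟨hadj, hux⟩
  exact h1.trans (h2 ▸ hu v c)
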